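/- Positive invariance for the HIV submodel: let (S, H, H^T) : [0,∞) → ℝ³ be a continuously differentiable solution of the HIV submodel with N(t) = S+H+H^T and N(t) > 0. If all three components are nonnegative at t = 0 and N(0) ≤ Λ/d, then all three components remain nonnegative and N(t) ≤ Λ/d for every t ≥ 0; that is, the region D2 = {(S, H, H^T) ∈ ℝ₊³ : S+H+H^T ≤ Λ/d} is positively invariant. -/

import Mathlib

open Set Filter

private lemma nonneg_of_mul_exp {x e : ℝ} (he : 0 < e) (h : 0 ≤ x * e) : 0 ≤ x := by
  by_contra h'
  push_neg at h'
  nlinarith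

private lemma mono_aux (f f' : ℝ → ℝ)
    (hf : ∀ t ≥ (0:ℝ), HasDerivAt f (f' t) t)
    (h' : ∀ t ≥ (0:ℝ), 0 ≤ f' t) :
    ∀ t ≥ (0:ℝ), f 0 ≤ f t := by
  have hmono : MonotoneOn f (Set.Ici (0:ℝ)) := by
    apply monotoneOn_of_deriv_nonneg (convex_Ici 0)
    · exact fun x hx => (hf x hx).continuousAt.continuousWithinAt
    · intro x hx
      rw [interior_Ici] at hx
      exact (hf x hx.le).differentiableAt.differentiableWithinAt
    · intro x hx
      rw [interior_Ici] at hx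
      rw [(hf x hx.le).deriv]
      exact h' x hx.le
  exact fun t ht => hmono Set.self_mem_Ici ht ht

/-- Positive invariance of the region `D2` for the HIV submodel: nonnegativity of all
components is preserved and the total population stays below `Λ/d`. -/
theorem HIV_positive_invariance (Lam d dH r2 ls : ℝ)
    (hLam : 0 < Lam) (hd : 0 < d) (hdH : 0 < dH) (hr2 : 0 < r2) (hls : 0 < ls)
    (S H HT N : ℝ → ℝ)
    (hN : ∀ t, N t = S t + H t + HT t)
    (hNpos : ∀ t ≥ (0 : ℝ), 0 < N t)
    (hS : ∀ t ≥ (0 : ℝ), HasDerivAt S (Lam - d * S t - ls * S t * H t / N t) t)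
    (hH : ∀ t ≥ (0 : ℝ), HasDerivAt H (ls * S t * H t / N t - (r2 + d + dH) * H t) t)
    (hHT : ∀ t ≥ (0 : ℝ), HasDerivAt HT (r2 * H t - (d + dH) * HT t) t)
    (h0 : 0 ≤ S 0 ∧ 0 ≤ H 0 ∧ 0 ≤ HT 0)
    (hN0le : N 0 ≤ Lam / d) :
    ∀ t ≥ (0 : ℝ), (0 ≤ S t ∧ 0 ≤ H t ∧ 0 ≤ HT t) ∧ N t ≤ Lam / d := by
  obtain ⟨hS0, hH0, hHT0⟩ := h0
  have hNne : ∀ t ≥ (0:ℝ), N t ≠ 0 := fun t ht => (hNpos t ht).ne'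
  -- continuity facts
  have hScont : ∀ p ≥ (0:ℝ), ContinuousAt S p := fun p hp => (hS p hp).continuousAt
  have hHcont : ∀ p ≥ (0:ℝ), ContinuousAt H p := fun p hp => (hH p hp).continuousAt
  have hHTcont : ∀ p ≥ (0:ℝ), ContinuousAt HT p := fun p hp => (hHT p hp).continuousAt
  have hNcont : ∀ p ≥ (0:ℝ), ContinuousAt N p := by
    intro p hp
    have : ContinuousAt (fun u => S u + H u + HT u) p :=
      ((hScont p hp).add (hHcont p hp)).add (hHTcont p hp)
    exact this.congr (Eventually.of_forall fun u => (hN u).symm)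
  have hmax : Continuous fun t : ℝ => max t 0 := continuous_id.max continuous_const
  -- Step 1 : H ≥ 0
  have hHnn : ∀ t ≥ (0:ℝ), 0 ≤ H t := by
    set a : ℝ → ℝ := fun p => ls * S p / N p - (r2 + d + dH) with ha
    have hacont : ∀ p ≥ (0:ℝ), ContinuousAt a p := fun p hp =>
      (((continuousAt_const.mul (hScont p hp)).div (hNcont p hp) (hNne p hp))).sub
        continuousAt_const
    set c : ℝ → ℝ := fun t => a (max t 0) with hc
    have hccont : Continuous c := by
      rw [continuous_iff_continuousAt]
      intro t
      show ContinuousAt (a ∘ fun u => max u 0) t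
      exact ContinuousAt.comp (x := t) (g := a) (f := fun u => max u 0)
        (hacont _ (le_max_right t 0)) hmax.continuousAt
    set A : ℝ → ℝ := fun t => ∫ s in (0:ℝ)..t, c s with hA
    have hAderiv : ∀ t : ℝ, HasDerivAt A (c t) t := fun t =>
      (hccont.integral_hasStrictDerivAt 0 t).hasDerivAt
    have hg : ∀ t ≥ (0:ℝ), HasDerivAt (fun u => H u * Real.exp (-(A u))) 0 t := by
      intro t ht
      have hct : c t = a t := by simp [hc, max_eq_left ht]
      have hH' : HasDerivAt H (a t * H t) t := by
        have := hH t ht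
        convert this using 1
        have hne := hNne t ht
        rw [ha]
        field_simp
      have hexp : HasDerivAt (fun u => Real.exp (-(A u)))
          (Real.exp (-(A t)) * (-(c t))) t := ((hAderiv t).neg).exp
      have := hH'.mul hexp
      refine this.congr_deriv ?_
      rw [hct]; ring
    have hkey := mono_aux _ (fun _ => (0:ℝ)) hg (fun _ _ => le_refl 0)
    intro t ht
    have h1 := hkey t ht
    have hA0 : A 0 = 0 := intervalIntegral.integral_same
    rw [hA0] at h1
    simp only [neg_zero, Real.exp_zero, mul_one] at h1
    exact nonneg_of_mul_exp (Real.exp_pos _) (le_trans (by positivity) h1)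
  -- Step 2 : S ≥ 0
  have hSnn : ∀ t ≥ (0:ℝ), 0 ≤ S t := by
    set b : ℝ → ℝ := fun p => d + ls * H p / N p with hb
    have hbcont : ∀ p ≥ (0:ℝ), ContinuousAt b p := fun p hp =>
      continuousAt_const.add ((continuousAt_const.mul (hHcont p hp)).div (hNcont p hp)
        (hNne p hp))
    set c : ℝ → ℝ := fun t => b (max t 0) with hc
    have hccont : Continuous c := by
      rw [continuous_iff_continuousAt]
      intro t
      show ContinuousAt (b ∘ fun u => max u 0) t
      exact ContinuousAt.comp (x := t) (g := b) (f := fun u => max u 0)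
        (hbcont _ (le_max_right t 0)) hmax.continuousAt
    set B : ℝ → ℝ := fun t => ∫ s in (0:ℝ)..t, c s with hB
    have hBderiv : ∀ t : ℝ, HasDerivAt B (c t) t := fun t =>
      (hccont.integral_hasStrictDerivAt 0 t).hasDerivAt
    have hg : ∀ t ≥ (0:ℝ), HasDerivAt (fun u => S u * Real.exp (B u))
        (Lam * Real.exp (B t)) t := by
      intro t ht
      have hct : c t = b t := by simp [hc, max_eq_left ht]
      have hexp : HasDerivAt (fun u => Real.exp (B u))
          (Real.exp (B t) * c t) t := (hBderiv t).exp
      have := (hS t ht).mul hexp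
      refine this.congr_deriv ?_
      rw [hct, hb]
      have hne := hNne t ht
      field_simp
      ring
    have hkey := mono_aux _ _ hg (fun u hu => by positivity)
    intro t ht
    have h1 := hkey t ht
    have hB0 : B 0 = 0 := intervalIntegral.integral_same
    rw [hB0] at h1
    simp only [Real.exp_zero, mul_one] at h1
    exact nonneg_of_mul_exp (Real.exp_pos _) (le_trans (by positivity) h1)
  -- Step 3 : HT ≥ 0
  have hHTnn : ∀ t ≥ (0:ℝ), 0 ≤ HT t := by
    have hg : ∀ t ≥ (0:ℝ), HasDerivAt (fun u => HT u * Real.exp ((d + dH) * u))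
        (r2 * H t * Real.exp ((d + dH) * t)) t := by
      intro t ht
      have hlin : HasDerivAt (fun u : ℝ => (d + dH) * u) (d + dH) t := by
        simpa using (hasDerivAt_id t).const_mul (d + dH)
      have hexp : HasDerivAt (fun u => Real.exp ((d + dH) * u))
          (Real.exp ((d + dH) * t) * (d + dH)) t := hlin.exp
      have := (hHT t ht).mul hexp
      refine this.congr_deriv ?_
      ring
    have hkey := mono_aux _ _ hg (fun u hu => by
      have := hHnn u hu
      positivity)
    intro t ht
    have h1 := hkey t ht
    simp only [mul_zero, Real.exp_zero, mul_one] at h1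
    exact nonneg_of_mul_exp (Real.exp_pos _) (le_trans (by positivity) h1)
  -- Step 4 : N ≤ Lam / d
  have hNd : ∀ t ≥ (0:ℝ), HasDerivAt N (Lam - d * N t - dH * (H t + HT t)) t := by
    intro t ht
    have h1 := ((hS t ht).add (hH t ht)).add (hHT t ht)
    have h2 : HasDerivAt (fun u => S u + H u + HT u)
        (Lam - d * N t - dH * (H t + HT t)) t := by
      refine h1.congr_deriv ?_
      rw [hN t]
      have hne : N t ≠ 0 := hNne t ht
      rw [hN t] at hne
      field_simp
      ring
    exact h2.congr_of_eventuallyEq (Eventually.of_forall hN)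
  have hNle : ∀ t ≥ (0:ℝ), N t ≤ Lam / d := by
    have hg : ∀ t ≥ (0:ℝ), HasDerivAt (fun u => -((N u - Lam / d) * Real.exp (d * u)))
        (dH * (H t + HT t) * Real.exp (d * t)) t := by
      intro t ht
      have hlin : HasDerivAt (fun u : ℝ => d * u) d t := by
        simpa using (hasDerivAt_id t).const_mul d
      have hexp : HasDerivAt (fun u => Real.exp (d * u))
          (Real.exp (d * t) * d) t := hlin.exp
      have hsub : HasDerivAt (fun u => N u - Lam / d)
          (Lam - d * N t - dH * (H t + HT t)) t := (hNd t ht).sub_const _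
      have := (hsub.mul hexp).neg
      refine this.congr_deriv ?_
      field_simp
      ring
    have hkey := mono_aux _ _ hg (fun u hu => by
      have h1 := hHnn u hu
      have h2 := hHTnn u hu
      positivity)
    intro t ht
    have h1 := hkey t ht
    simp only [mul_zero, Real.exp_zero, mul_one] at h1
    have h2 : (N t - Lam / d) * Real.exp (d * t) ≤ N 0 - Lam / d := by linarith
    have h3 : (N t - Lam / d) * Real.exp (d * t) ≤ 0 := le_trans h2 (by linarith)
    nlinarith [Real.exp_pos (d * t)]
  exact fun t ht => ⟨⟨hSnn t ht, hHnn t ht, hHTnn t ht⟩, hNle t ht⟩
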